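/- arXiv:2101.01127 — 2 statements merged into one kernel-verified Lean document; each statement's English description precedes it below -/
import Mathlib

section
/- Let v ∈ (L^1 + L^∞)(ℝ, ℝ) and let ψ, φ ∈ H^1(ℝ, ℝ) be two real eigenfunctions of the one-dimensional Schrödinger operator -d²/dx² + v with the same eigenvalue E, i.e. -ψ'' + vψ = Eψ and -φ'' + vφ = Eφ. Then ψ and φ are linearly dependent: there exists a ∈ ℝ with ψ = a·φ. -/
open MeasureTheory Set

lemma gronwall_ball (F F' c : ℝ → ℝ)
    (hF : ∀ x, HasDerivAt F (F' x) x)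
    (hF'c : Continuous F')
    (hFnn : ∀ x, 0 ≤ F x)
    (hcm : AEStronglyMeasurable c volume)
    (hci : ∀ a b : ℝ, IntegrableOn c (Icc a b) volume)
    (hcnn : ∀ x, 0 ≤ c x)
    (hbound : ∀ x, |F' x| ≤ c x * F x)
    {s : ℝ} (hs : F s = 0) :
    ∃ ε > 0, ∀ x ∈ Metric.ball s ε, F x = 0 := by
  have hFcont : Continuous F :=
    continuous_iff_continuousAt.mpr fun x => (hF x).continuousAt
  -- interval integrability of c
  have hcii : ∀ a b : ℝ, IntervalIntegrable c volume a b := fun a b =>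
    ⟨((hci a b).mono_set Ioc_subset_Icc_self), ((hci b a).mono_set Ioc_subset_Icc_self)⟩
  -- interval integrability of c * F
  have hcFii : ∀ a b : ℝ, IntervalIntegrable (fun t => c t * F t) volume a b := by
    have key : ∀ a b : ℝ, IntegrableOn (fun t => c t * F t) (Icc a b) volume := by
      intro a b
      obtain ⟨C, hC⟩ : ∃ C : ℝ, ∀ t ∈ Icc a b, F t ≤ C := by
        rcases isCompact_Icc.exists_bound_of_continuousOn (hFcont.continuousOn (s := Icc a b))
          with ⟨C, hC⟩
        exact ⟨C, fun t ht => (le_abs_self _).trans (by simpa [Real.norm_eq_abs] using hC t ht)⟩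
      refine Integrable.mono' ((hci a b).mul_const C) (hcm.restrict.mul
        (hFcont.aestronglyMeasurable.restrict)) ?_
      refine (ae_restrict_iff' measurableSet_Icc).mpr (ae_of_all _ fun t ht => ?_)
      rw [Real.norm_eq_abs, abs_of_nonneg (mul_nonneg (hcnn t) (hFnn t))]
      exact mul_le_mul_of_nonneg_left (hC t ht) (hcnn t)
    exact fun a b =>
      ⟨((key a b).mono_set Ioc_subset_Icc_self), ((key b a).mono_set Ioc_subset_Icc_self)⟩
  -- the primitive of c
  set Φ : ℝ → ℝ := fun x => ∫ t in s..x, c t with hΦdef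
  have hΦcont : Continuous Φ := intervalIntegral.continuous_primitive hcii s
  have hΦs : Φ s = 0 := intervalIntegral.integral_same
  obtain ⟨δ, hδpos, hδ⟩ := Metric.continuousAt_iff.mp hΦcont.continuousAt (1/4) (by norm_num)
  refine ⟨δ/2, by positivity, ?_⟩
  -- max of F on the closed ball
  have hKc : IsCompact (Metric.closedBall s (δ/2)) := isCompact_closedBall s _
  obtain ⟨z, hzK, hz⟩ := hKc.exists_isMaxOn (Metric.nonempty_closedBall.mpr (by positivity))
    (hFcont.continuousOn)
  set M := F z with hM
  have hMnn : 0 ≤ M := hFnn z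
  have hzs : |z - s| ≤ δ/2 := by
    have := Metric.mem_closedBall.mp hzK
    rwa [Real.dist_eq] at this
  -- key : M ≤ M / 4
  have hΦz : |Φ z| ≤ 1/4 := by
    have : dist z s < δ := by
      rw [Real.dist_eq]; linarith [abs_nonneg (z - s)]
    have := hδ this
    rw [Real.dist_eq, hΦs, sub_zero] at this
    exact this.le
  have hsub : ∀ t, t ∈ uIcc s z → t ∈ Metric.closedBall s (δ/2) := by
    intro t ht
    rw [Metric.mem_closedBall, Real.dist_eq]
    rcases mem_uIcc.mp ht with ⟨h1, h2⟩ | ⟨h1, h2⟩ <;> rw [abs_le] <;>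
      constructor <;> cases abs_le.mp hzs <;> linarith
  have hftc : F z = ∫ t in s..z, F' t := by
    rw [intervalIntegral.integral_eq_sub_of_hasDerivAt (fun t _ => hF t)
      (hF'c.intervalIntegrable s z), hs, sub_zero]
  have hMle : M ≤ 1/4 * M := by
    rcases le_total s z with hsz | hzs'
    · calc M = ∫ t in s..z, F' t := hftc
        _ ≤ ∫ t in s..z, c t * F t := by
            refine intervalIntegral.integral_mono_on hsz (hF'c.intervalIntegrable s z)
              (hcFii s z) fun t _ => (le_abs_self _).trans (hbound t)
        _ ≤ ∫ t in s..z, c t * M := by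
            refine intervalIntegral.integral_mono_on hsz (hcFii s z)
              ((hcii s z).mul_const M) fun t ht => ?_
            exact mul_le_mul_of_nonneg_left (hz (hsub t (by rwa [uIcc_of_le hsz]))) (hcnn t)
        _ = Φ z * M := by rw [intervalIntegral.integral_mul_const]
        _ ≤ 1/4 * M := mul_le_mul_of_nonneg_right ((le_abs_self _).trans hΦz) hMnn
    · have hftc' : F z = ∫ t in z..s, -F' t := by
        rw [intervalIntegral.integral_neg, ← intervalIntegral.integral_symm, ← hftc]
      calc M = ∫ t in z..s, -F' t := hftc'
        _ ≤ ∫ t in z..s, c t * F t := by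
            refine intervalIntegral.integral_mono_on hzs' ((hF'c.intervalIntegrable z s).neg)
              (hcFii z s) fun t _ => (neg_le_abs _).trans (hbound t)
        _ ≤ ∫ t in z..s, c t * M := by
            refine intervalIntegral.integral_mono_on hzs' (hcFii z s)
              ((hcii z s).mul_const M) fun t ht => ?_
            refine mul_le_mul_of_nonneg_left (hz (hsub t ?_)) (hcnn t)
            rw [uIcc_of_ge hzs']; exact ht
        _ = (∫ t in z..s, c t) * M := by rw [intervalIntegral.integral_mul_const]
        _ ≤ 1/4 * M := by
            refine mul_le_mul_of_nonneg_right ?_ hMnn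
            have : (∫ t in z..s, c t) = -Φ z := by
              rw [hΦdef]; simp [intervalIntegral.integral_symm z s]
            rw [this]
            exact (neg_le_abs _).trans hΦz
  have hM0 : M = 0 := by linarith
  intro x hx
  have hxK : x ∈ Metric.closedBall s (δ/2) := Metric.ball_subset_closedBall hx
  exact le_antisymm (hM0 ▸ hz hxK) (hFnn x)

lemma gronwall_zero (F F' c : ℝ → ℝ)
    (hF : ∀ x, HasDerivAt F (F' x) x)
    (hF'c : Continuous F')
    (hFnn : ∀ x, 0 ≤ F x)
    (hcm : AEStronglyMeasurable c volume)
    (hci : ∀ a b : ℝ, IntegrableOn c (Icc a b) volume)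
    (hcnn : ∀ x, 0 ≤ c x)
    (hbound : ∀ x, |F' x| ≤ c x * F x)
    {s : ℝ} (hs : F s = 0) :
    ∀ x, F x = 0 := by
  have hFcont : Continuous F :=
    continuous_iff_continuousAt.mpr fun x => (hF x).continuousAt
  have hclopen : IsClopen {x : ℝ | F x = 0} := by
    constructor
    · exact isClosed_eq hFcont continuous_const
    · rw [Metric.isOpen_iff]
      intro y hy
      obtain ⟨ε, hε, h⟩ := gronwall_ball F F' c hF hF'c hFnn hcm hci hcnn hbound hy
      exact ⟨ε, hε, fun x hx => h x hx⟩
  have := hclopen.eq_univ ⟨s, hs⟩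
  intro x
  have : x ∈ {x : ℝ | F x = 0} := this ▸ Set.mem_univ x
  exact this

/-- Non-degeneracy theorem in dimension one: two real `H¹` eigenfunctions of
`-d²/dx² + v` with the same eigenvalue `E` are linearly dependent. -/
theorem nondegeneracy_dim_one (v ψ φ : ℝ → ℝ) (E : ℝ)
    (hv : ∃ v₁ v₂ : ℝ → ℝ, v = v₁ + v₂ ∧ MemLp v₁ 1 volume ∧ MemLp v₂ ⊤ volume)
    (hψC2 : ContDiff ℝ 2 ψ) (hφC2 : ContDiff ℝ 2 φ)
    (hψL2 : MemLp ψ 2 volume) (hψ'L2 : MemLp (deriv ψ) 2 volume)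
    (hφL2 : MemLp φ 2 volume) (hφ'L2 : MemLp (deriv φ) 2 volume)
    (hψeq : ∀ x, -deriv (deriv ψ) x + v x * ψ x = E * ψ x)
    (hφeq : ∀ x, -deriv (deriv φ) x + v x * φ x = E * φ x)
    (hφ0 : φ ≠ 0) :
    ∃ a : ℝ, ψ = fun x => a * φ x := by
  obtain ⟨v₁, v₂, hveq, hv1, hv2⟩ := hv
  -- smoothness facts
  have h2 : (2 : WithTop ℕ∞) = 1 + 1 := by norm_num
  obtain ⟨hψd, -, hψ1⟩ := contDiff_succ_iff_deriv.mp (h2 ▸ hψC2)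
  obtain ⟨hψ'd, hψ''c⟩ := contDiff_one_iff_deriv.mp hψ1
  obtain ⟨hφd, -, hφ1⟩ := contDiff_succ_iff_deriv.mp (h2 ▸ hφC2)
  obtain ⟨hφ'd, hφ''c⟩ := contDiff_one_iff_deriv.mp hφ1
  -- second derivative identities
  have hψ2 : ∀ x, deriv (deriv ψ) x = (v x - E) * ψ x := by
    intro x; linear_combination (-1 : ℝ) * hψeq x
  have hφ2 : ∀ x, deriv (deriv φ) x = (v x - E) * φ x := by
    intro x; linear_combination (-1 : ℝ) * hφeq x
  -- Wronskian is constant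
  set Wf : ℝ → ℝ := fun x => ψ x * deriv φ x - deriv ψ x * φ x with hWfdef
  have hWd : ∀ x, HasDerivAt Wf 0 x := by
    intro x
    have h1 : HasDerivAt (fun y => ψ y * deriv φ y)
        (deriv ψ x * deriv φ x + ψ x * deriv (deriv φ) x) x :=
      ((hψd x).hasDerivAt).mul ((hφ'd x).hasDerivAt)
    have h2' : HasDerivAt (fun y => deriv ψ y * φ y)
        (deriv (deriv ψ) x * φ x + deriv ψ x * deriv φ x) x :=
      ((hψ'd x).hasDerivAt).mul ((hφd x).hasDerivAt)
    have := h1.sub h2'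
    exact this.congr_deriv (by rw [hψ2 x, hφ2 x]; ring)
  have hWconst : ∀ x, Wf x = Wf 0 :=
    fun x => is_const_of_deriv_eq_zero (fun y => (hWd y).differentiableAt)
      (fun y => (hWd y).deriv) x 0
  -- Wronskian is integrable, hence zero
  have hpqr : (1 : ENNReal) / 1 = 1 / 2 + 1 / 2 := by
    rw [one_div_one]; exact (ENNReal.add_halves 1).symm
  have hint1 : Integrable (fun x => ψ x * deriv φ x) volume :=
    memLp_one_iff_integrable.mp (hφ'L2.smul (φ := ψ) hψL2)
  have hint2 : Integrable (fun x => deriv ψ x * φ x) volume :=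
    memLp_one_iff_integrable.mp (hφL2.smul (φ := deriv ψ) hψ'L2)
  have hWint : Integrable Wf volume := hint1.sub hint2
  have hW0 : ∀ x, Wf x = 0 := by
    have hconst : Integrable (fun _ : ℝ => Wf 0) volume :=
      hWint.congr (Filter.Eventually.of_forall hWconst)
    rcases integrable_const_iff.mp hconst with h | h
    · intro x; rw [hWconst x, h]
    · exact absurd h.measure_univ_lt_top (by simp [Real.volume_univ])
  -- pick a point where φ ≠ 0
  obtain ⟨x₀, hx₀⟩ : ∃ x₀, φ x₀ ≠ 0 := by
    rcases Function.ne_iff.mp hφ0 with ⟨x₀, hx₀⟩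
    exact ⟨x₀, by simpa using hx₀⟩
  set a : ℝ := ψ x₀ / φ x₀ with hadef
  set u : ℝ → ℝ := fun x => ψ x - a * φ x with hudef
  set u' : ℝ → ℝ := fun x => deriv ψ x - a * deriv φ x with hu'def
  set u'' : ℝ → ℝ := fun x => deriv (deriv ψ) x - a * deriv (deriv φ) x with hu''def
  have hu : ∀ x, HasDerivAt u (u' x) x := fun x =>
    ((hψd x).hasDerivAt).sub (((hφd x).hasDerivAt).const_mul a)
  have hu' : ∀ x, HasDerivAt u' (u'' x) x := fun x =>
    ((hψ'd x).hasDerivAt).sub (((hφ'd x).hasDerivAt).const_mul a)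
  have hu''eq : ∀ x, u'' x = (v x - E) * u x := by
    intro x; simp only [hu''def, hudef]; rw [hψ2 x, hφ2 x]; ring
  -- the energy function
  set F : ℝ → ℝ := fun x => u x * u x + u' x * u' x with hFdef
  set F' : ℝ → ℝ := fun x => 2 * u x * u' x + 2 * u' x * u'' x with hF'def
  have hFd : ∀ x, HasDerivAt F (F' x) x := by
    intro x
    have := ((hu x).mul (hu x)).add ((hu' x).mul (hu' x))
    exact this.congr_deriv (by simp only [hF'def]; ring)
  have hucont : Continuous u := hψd.continuous.sub (continuous_const.mul hφd.continuous)
  have hu'cont : Continuous u' := hψ'd.continuous.sub (continuous_const.mul hφ'd.continuous)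
  have hu''cont : Continuous u'' := hψ''c.sub (continuous_const.mul hφ''c)
  have hF'cont : Continuous F' :=
    ((continuous_const.mul hucont).mul hu'cont).add
      ((continuous_const.mul hu'cont).mul hu''cont)
  have hFnn : ∀ x, 0 ≤ F x := fun x => add_nonneg (mul_self_nonneg _) (mul_self_nonneg _)
  -- the coefficient function
  set c : ℝ → ℝ := fun x => 1 + |v x - E| with hcdef
  have hvm : AEStronglyMeasurable v volume := hveq ▸ hv1.1.add hv2.1
  have hcm : AEStronglyMeasurable c volume := by
    have habs : AEStronglyMeasurable (fun x => |v x - E|) volume := by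
      simpa [Real.norm_eq_abs] using (hvm.sub aestronglyMeasurable_const).norm
    exact aestronglyMeasurable_const.add habs
  have hci : ∀ A B : ℝ, IntegrableOn c (Set.Icc A B) volume := by
    intro A B
    haveI : IsFiniteMeasure (volume.restrict (Set.Icc A B)) :=
      ⟨by rw [Measure.restrict_apply_univ]; exact measure_Icc_lt_top⟩
    have h1 : Integrable v₁ (volume.restrict (Set.Icc A B)) :=
      (memLp_one_iff_integrable.mp hv1).restrict
    have h2 : Integrable v₂ (volume.restrict (Set.Icc A B)) :=
      memLp_one_iff_integrable.mp ((hv2.restrict _).mono_exponent le_top)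
    have hv' : Integrable v (volume.restrict (Set.Icc A B)) := hveq ▸ h1.add h2
    exact (integrable_const _).add ((hv'.sub (integrable_const E)).abs)
  have hcnn : ∀ x, 0 ≤ c x := fun x => by positivity
  -- the Gronwall bound
  have hbound : ∀ x, |F' x| ≤ c x * F x := by
    intro x
    have h1 : |2 * u x * u' x| ≤ u x * u x + u' x * u' x := by
      rw [abs_le]
      constructor
      · nlinarith [sq_nonneg (u x + u' x)]
      · nlinarith [sq_nonneg (u x - u' x)]
    calc |F' x| = |1 + (v x - E)| * |2 * u x * u' x| := by
          rw [← abs_mul]; congr 1; rw [hF'def]; simp only; rw [hu''eq x]; ring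
      _ ≤ (1 + |v x - E|) * (u x * u x + u' x * u' x) := by
          refine mul_le_mul ?_ h1 (abs_nonneg _) (by positivity)
          calc |1 + (v x - E)| ≤ |(1 : ℝ)| + |v x - E| := abs_add_le _ _
            _ = 1 + |v x - E| := by rw [abs_one]
      _ = c x * F x := rfl
  -- initial condition
  have hux₀ : u x₀ = 0 := by
    simp only [hudef, hadef]
    field_simp
    ring
  have hu'x₀ : u' x₀ = 0 := by
    have hW := hW0 x₀
    simp only [hWfdef] at hW
    simp only [hu'def, hadef]
    field_simp
    linarith [hW]
  have hFx₀ : F x₀ = 0 := by simp [hFdef, hux₀, hu'x₀]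
  -- conclude
  have hFzero := gronwall_zero F F' c hFd hF'cont hFnn hcm hci hcnn hbound hFx₀
  refine ⟨a, funext fun x => ?_⟩
  have h := hFzero x
  simp only [hFdef] at h
  have hu0 : u x = 0 := by nlinarith [mul_self_nonneg (u x), mul_self_nonneg (u' x)]
  simp only [hudef] at hu0
  linarith
end

section
/- Suppose that for every v in a normed space and every k, the one-sided directional derivative satisfies δ⁺G^{(k)}(v)(−u) = −δ⁺G^{(M+m−k)}(v)(u) for all directions u, where m ≤ k ≤ M. If v is a local maximizer of G^{(k)} (so δ⁺G^{(k)}(v)(u) ≤ 0 for all u) and additionally δ⁺G^{(ℓ)}(v) ≤ δ⁺G^{(ℓ')}(v) pointwise whenever ℓ ≤ ℓ', and k ≥ (M+m)/2, then δ⁺G^{(k)}(v)(u) = 0 for all u; i.e., G^{(k)} is Gateaux differentiable at v with zero differential. -/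
open Filter

/-- Symmetry argument at a local maximizer: if the one-sided directional derivatives
`D^{(j)}` of the family `G^{(j)}` satisfy the reflection identity
`D^{(k)}(v)(−u) = −D^{(M+m−k)}(v)(u)`, are monotone in the index `j ∈ [m, M]`,
`D^{(k)}(v) ≤ 0` (local maximality), and `k ≥ (M+m)/2`, then `D^{(k)}(v)(u) = 0` in
every direction `u`: `G^{(k)}` is Gateaux differentiable at `v` with zero
differential. -/
theorem local_max_symmetry_zero_derivative {X : Type*} [NormedAddCommGroup X]
    [NormedSpace ℝ X]
    (G : ℕ → X → ℝ) (D : ℕ → X → X → ℝ) (v : X) (m k M : ℕ)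
    (hmk : m ≤ k) (hkM : k ≤ M)
    (hD : ∀ (j : ℕ) (u : X),
        Tendsto (fun t : ℝ => (G j (v + t • u) - G j v) / t)
          (nhdsWithin 0 (Set.Ioi 0)) (nhds (D j v u)))
    (hrefl : ∀ u : X, D k v (-u) = -(D (M + m - k) v u))
    (hmax : ∀ u : X, D k v u ≤ 0)
    (hmono : ∀ ℓ ℓ' : ℕ, m ≤ ℓ → ℓ ≤ ℓ' → ℓ' ≤ M → ∀ u : X, D ℓ v u ≤ D ℓ' v u)
    (hk2 : (M + m : ℝ) ≤ 2 * k) :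
    ∀ u : X, D k v u = 0 := by
  have h2 : M + m ≤ 2 * k := by exact_mod_cast hk2
  intro u
  have h1 : m ≤ M + m - k := by omega
  have h3 : M + m - k ≤ k := by omega
  have hle : D (M + m - k) v u ≤ D k v u := hmono _ _ h1 h3 hkM u
  have h4 := hrefl u
  have h5 := hmax (-u)
  have h6 := hmax u
  linarith
end
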